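/- The map g ↦ D(g) = ∑_{h∈G} S_h S_{gh}* is injective (the representation is faithful): if D(g) = Id then g = e. -/

import Mathlib

open ContinuousLinearMap

/-- The representation `g ↦ D(g) = ∑_h S_h S_{gh}*` is faithful: if `D(g) = Id`
then `g = e`. -/
theorem JS_group_faithful
    {H : Type*} [NormedAddCommGroup H] [InnerProductSpace ℂ H] [CompleteSpace H]
    [Nontrivial H]
    {G : Type*} [Group G] [Countable G]
    (S : G → H →L[ℂ] H)
    (hiso : ∀ h, adjoint (S h) ∘L S h = 1)
    (horth : ∀ h k, h ≠ k → adjoint (S h) ∘L S k = 0)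
    (hsum : ∀ x : H, HasSum (fun h : G => S h (adjoint (S h) x)) x)
    (D : G → H →L[ℂ] H)
    (hD : ∀ (g : G) (x : H), HasSum (fun h : G => S h (adjoint (S (g * h)) x)) (D g x)) :
    ∀ g : G, D g = 1 → g = 1 := by
  classical
  intro g hg
  by_contra hne
  obtain ⟨x, hx⟩ := exists_ne (0 : H)
  have h1 : HasSum (fun k : G => S k (adjoint (S (g * k)) (S 1 x))) (D g (S 1 x)) := hD g _
  have h2 : HasSum (fun k : G => S k (adjoint (S (g * k)) (S 1 x))) (S g⁻¹ x) := by
    have hfun : (fun k : G => S k (adjoint (S (g * k)) (S 1 x))) =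
        fun k : G => if k = g⁻¹ then S g⁻¹ x else 0 := by
      funext k
      by_cases hk : k = g⁻¹
      · subst hk
        rw [mul_inv_cancel]
        have h := DFunLike.congr_fun (hiso 1) x
        simp only [comp_apply, one_apply] at h
        simp [h]
      · have hgk : g * k ≠ 1 := fun h => hk (eq_inv_of_mul_eq_one_right h)
        have h := DFunLike.congr_fun (horth (g * k) 1 hgk) x
        simp only [comp_apply, zero_apply] at h
        simp [hk, h]
    rw [hfun]
    exact hasSum_ite_eq _ _
  have heq : S 1 x = S g⁻¹ x := by
    have := h1.unique h2
    rwa [hg, ContinuousLinearMap.one_apply] at this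
  have hg1 : (1 : G) ≠ g⁻¹ := fun h => hne (by rw [← inv_inv g, ← h, inv_one])
  have h0 := DFunLike.congr_fun (horth 1 g⁻¹ hg1) x
  simp only [comp_apply, zero_apply] at h0
  have hxx : x = 0 := by
    have h := DFunLike.congr_fun (hiso 1) x
    simp only [comp_apply, ContinuousLinearMap.one_apply] at h
    rw [← h, heq, h0]
  exact hx hxx
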